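/- arXiv:0907.2267 — 3 statements merged into one kernel-verified Lean document; each statement's English description precedes it below -/
import Mathlib

section
/- Let A be an N×N Hermitian complex matrix, M an N×N Hermitian positive definite complex matrix, and let u_1,…,u_N ∈ ℂ^N be an M-orthonormal system of generalized eigenvectors with real eigenvalues in ascending order λ_1 ≤ λ_2 ≤ … ≤ λ_N, i.e. A u_j = λ_j M u_j and u_i^* M u_j = δ_{ij}. Fix 1 ≤ m < N and λℓ, λu ∈ ℝ. Let Φ_ℓ be the N×m matrix with columns u_1,…,u_m and Φ_u the N×(N−m) matrix with columns u_{m+1},…,u_N. Then λ_m ≤ λℓ and λu ≤ λ_{m+1} hold if and only if Φ_ℓ^* (A − λℓ M) Φ_ℓ is negative semidefinite and Φ_u^* (A − λu M) Φ_u is positive semidefinite. -/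
open Matrix
open scoped ComplexOrder

/-- A matrix `Y` is negative semidefinite if it is Hermitian and `xᴴ Y x ≤ 0` for all `x`. -/
def Matrix.NegSemidef' {m : ℕ} (Y : Matrix (Fin m) (Fin m) ℂ) : Prop :=
  Y.IsHermitian ∧ ∀ x : Fin m → ℂ, dotProduct (star x) (Y *ᵥ x) ≤ 0

lemma aux_entry {N k : ℕ} (A M : Matrix (Fin N) (Fin N) ℂ) (c : ℝ)
    (lam : Fin N → ℝ) (u : Fin N → Fin N → ℂ)
    (heig : ∀ j : Fin N, A *ᵥ u j = (lam j : ℂ) • (M *ᵥ u j))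
    (horth : ∀ i j : Fin N,
      dotProduct (star (u i)) (M *ᵥ u j) = if i = j then 1 else 0)
    (f : Fin k → Fin N) (hf : Function.Injective f) (i j : Fin k) :
    ((Matrix.of fun n p => u (f p) n)ᴴ * (A - (c : ℂ) • M) *
      (Matrix.of fun n p => u (f p) n)) i j
      = if i = j then ((lam (f j) - c : ℝ) : ℂ) else 0 := by
  rw [Matrix.mul_assoc, Matrix.mul_apply]
  have hBΦ : ∀ n, ((A - (c : ℂ) • M) * (Matrix.of fun n p => u (f p) n)) n j
      = ((A - (c : ℂ) • M) *ᵥ u (f j)) n := by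
    intro n
    simp [Matrix.mul_apply, Matrix.mulVec, dotProduct]
  have : ∑ n, (Matrix.of fun n p => u (f p) n)ᴴ i n *
      ((A - (c : ℂ) • M) * (Matrix.of fun n p => u (f p) n)) n j
      = dotProduct (star (u (f i))) (((lam (f j) : ℂ) - c) • (M *ᵥ u (f j))) := by
    have hvec : (A - (c : ℂ) • M) *ᵥ u (f j)
        = ((lam (f j) : ℂ) - c) • (M *ᵥ u (f j)) := by
      rw [Matrix.sub_mulVec, heig, Matrix.smul_mulVec, sub_smul]
    simp only [hBΦ, hvec, conjTranspose_apply, Matrix.of_apply, dotProduct,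
      Pi.star_apply]
  rw [this, dotProduct_smul, horth]
  by_cases h : i = j
  · simp [h, Complex.ofReal_sub]
  · have : ¬ f i = f j := fun hc => h (hf hc)
    simp [h, this]

lemma aux_quad {k : ℕ} (d : Fin k → ℝ) (D : Matrix (Fin k) (Fin k) ℂ)
    (hD : ∀ i j, D i j = if i = j then (d j : ℂ) else 0) (x : Fin k → ℂ) :
    dotProduct (star x) (D *ᵥ x) = ((∑ i, d i * Complex.normSq (x i) : ℝ) : ℂ) := by
  simp only [dotProduct, Matrix.mulVec, Pi.star_apply, Complex.ofReal_sum]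
  refine Finset.sum_congr rfl fun i _ => ?_
  have : (∑ j, D i j * x j) = (d i : ℂ) * x i := by
    rw [Finset.sum_eq_single i]
    · rw [hD]; simp
    · intro b _ hb; rw [hD]; simp [Ne.symm hb]
    · simp
  rw [this, Complex.ofReal_mul, Complex.normSq_eq_conj_mul_self]
  simp only [Complex.star_def]
  ring

lemma aux_herm {k : ℕ} (d : Fin k → ℝ) (D : Matrix (Fin k) (Fin k) ℂ)
    (hD : ∀ i j, D i j = if i = j then (d j : ℂ) else 0) : D.IsHermitian := by
  ext i j
  rw [conjTranspose_apply, hD, hD]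
  by_cases h : i = j
  · subst h; simp
  · simp [h, Ne.symm h]

theorem stmt_4 {N m : ℕ} (hm1 : 1 ≤ m) (hmN : m < N)
    (A M : Matrix (Fin N) (Fin N) ℂ)
    (hA : A.IsHermitian) (hM : M.PosDef)
    (lam : Fin N → ℝ) (hmono : Monotone lam)
    (u : Fin N → Fin N → ℂ)
    (heig : ∀ j : Fin N, A *ᵥ u j = (lam j : ℂ) • (M *ᵥ u j))
    (horth : ∀ i j : Fin N,
      dotProduct (star (u i)) (M *ᵥ u j) = if i = j then 1 else 0)
    (lamℓ lamu : ℝ)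
    (Φℓ : Matrix (Fin N) (Fin m) ℂ)
    (hΦℓ : Φℓ = Matrix.of fun n (j : Fin m) => u (Fin.castLE hmN.le j) n)
    (Φu : Matrix (Fin N) (Fin (N - m)) ℂ)
    (hΦu : Φu = Matrix.of fun n (j : Fin (N - m)) =>
      u ⟨m + (j : ℕ), by omega⟩ n) :
    (lam ⟨m - 1, by omega⟩ ≤ lamℓ ∧ lamu ≤ lam ⟨m, hmN⟩) ↔
      ((Φℓᴴ * (A - (lamℓ : ℂ) • M) * Φℓ).NegSemidef' ∧
       (Φuᴴ * (A - (lamu : ℂ) • M) * Φu).PosSemidef) := by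
  -- entries of the two matrices
  have hfℓ : Function.Injective (Fin.castLE hmN.le : Fin m → Fin N) :=
    Fin.castLE_injective _
  have hfu : Function.Injective (fun j : Fin (N - m) => (⟨m + (j : ℕ), by omega⟩ : Fin N)) := by
    intro a b hab
    have := congrArg Fin.val hab
    simp at this
    exact Fin.ext this
  have hEℓ : ∀ i j, (Φℓᴴ * (A - (lamℓ : ℂ) • M) * Φℓ) i j
      = if i = j then ((lam (Fin.castLE hmN.le j) - lamℓ : ℝ) : ℂ) else 0 := by
    intro i j; rw [hΦℓ]; exact aux_entry A M lamℓ lam u heig horth _ hfℓ i j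
  have hEu : ∀ i j, (Φuᴴ * (A - (lamu : ℂ) • M) * Φu) i j
      = if i = j then ((lam ⟨m + (j : ℕ), by omega⟩ - lamu : ℝ) : ℂ) else 0 := by
    intro i j; rw [hΦu]; exact aux_entry A M lamu lam u heig horth _ hfu i j
  constructor
  · rintro ⟨h1, h2⟩
    have hdℓ : ∀ j : Fin m, lam (Fin.castLE hmN.le j) - lamℓ ≤ 0 := by
      intro j
      have : lam (Fin.castLE hmN.le j) ≤ lam ⟨m - 1, by omega⟩ := by
        apply hmono
        have := j.isLt
        exact Fin.mk_le_mk.mpr (by omega)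
      linarith
    have hdu : ∀ j : Fin (N - m), 0 ≤ lam ⟨m + (j : ℕ), by omega⟩ - lamu := by
      intro j
      have : lam ⟨m, hmN⟩ ≤ lam ⟨m + (j : ℕ), by omega⟩ :=
        hmono (Fin.mk_le_mk.mpr (by omega))
      linarith
    refine ⟨⟨aux_herm _ _ hEℓ, fun x => ?_⟩, ?_⟩
    · rw [aux_quad _ _ hEℓ x]
      rw [← Complex.ofReal_zero, Complex.real_le_real]
      apply Finset.sum_nonpos
      intro i _
      exact mul_nonpos_of_nonpos_of_nonneg (hdℓ i) (Complex.normSq_nonneg _)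
    · refine .of_dotProduct_mulVec_nonneg (aux_herm _ _ hEu) fun x => ?_
      rw [aux_quad _ _ hEu x, ← Complex.ofReal_zero, Complex.real_le_real]
      apply Finset.sum_nonneg
      intro i _
      exact mul_nonneg (hdu i) (Complex.normSq_nonneg _)
  · rintro ⟨⟨_, h1⟩, h2⟩
    constructor
    · have := h1 (Pi.single ⟨m - 1, by omega⟩ 1)
      rw [aux_quad _ _ hEℓ] at this
      rw [← Complex.ofReal_zero, Complex.real_le_real] at this
      have hsum : (∑ i, (lam (Fin.castLE hmN.le i) - lamℓ) *
          Complex.normSq ((Pi.single (⟨m - 1, by omega⟩ : Fin m) 1 : Fin m → ℂ) i))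
          = lam (Fin.castLE hmN.le ⟨m - 1, by omega⟩) - lamℓ := by
        rw [Finset.sum_eq_single (⟨m - 1, by omega⟩ : Fin m)]
        · simp
        · intro b _ hb; simp [Pi.single_eq_of_ne hb]
        · simp
      rw [hsum] at this
      have : lam (Fin.castLE hmN.le ⟨m - 1, by omega⟩) ≤ lamℓ := by linarith
      convert this using 2
      rfl
    · have := h2.dotProduct_mulVec_nonneg (Pi.single ⟨0, by omega⟩ 1)
      rw [aux_quad _ _ hEu] at this
      rw [← Complex.ofReal_zero, Complex.real_le_real] at this
      have hsum : (∑ i : Fin (N - m), (lam ⟨m + i.1, by omega⟩ - lamu) *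
          Complex.normSq ((Pi.single (⟨0, by omega⟩ : Fin (N - m)) 1 : Fin (N - m) → ℂ) i))
          = lam ⟨m, hmN⟩ - lamu := by
        rw [Finset.sum_eq_single (⟨0, by omega⟩ : Fin (N - m))]
        · simp
        · intro b _ hb; simp [Pi.single_eq_of_ne hb]
        · simp
      rw [hsum] at this
      linarith
end

section
/- Let E and F be real vector spaces, K_1 ⊆ F and K_2 ⊆ E convex cones, A : E → F a linear map, b ∈ F, and c, d : E → ℝ linear functionals. If w ∈ K_2 and θ > 0 satisfy θ • b − A(w) ∈ K_1 and d(w) = 1, then setting x := θ⁻¹ • w, one has x ∈ K_2, b − A(x) ∈ K_1, d(x) = θ⁻¹ > 0, and c(x)/d(x) = c(w). -/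
theorem stmt_6 {E F : Type*} [AddCommGroup E] [Module ℝ E] [AddCommGroup F] [Module ℝ F]
    (K₁ : ConvexCone ℝ F) (K₂ : ConvexCone ℝ E)
    (A : E →ₗ[ℝ] F) (b : F) (c d : E →ₗ[ℝ] ℝ)
    (w : E) (θ : ℝ) (hw : w ∈ K₂) (hθ : 0 < θ)
    (hfeas : θ • b - A w ∈ K₁) (hdw : d w = 1) :
    θ⁻¹ • w ∈ K₂ ∧ b - A (θ⁻¹ • w) ∈ K₁ ∧
      d (θ⁻¹ • w) = θ⁻¹ ∧ 0 < θ⁻¹ ∧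
      c (θ⁻¹ • w) / d (θ⁻¹ • w) = c w := by
  have hθi : 0 < θ⁻¹ := inv_pos.mpr hθ
  have hne : θ ≠ 0 := hθ.ne'
  refine ⟨K₂.smul_mem hθi hw, ?_, ?_, hθi, ?_⟩
  · have := K₁.smul_mem hθi hfeas
    simpa [smul_sub, smul_smul, inv_mul_cancel₀ hne] using this
  · simp [hdw]
  · rw [map_smul, map_smul, hdw, smul_eq_mul, smul_eq_mul, mul_one, mul_div_cancel_left₀ _ hθi.ne']
end

section
/- Let E and F be real vector spaces, K_1 ⊆ F and K_2 ⊆ E convex cones, A : E → F a linear map, b ∈ F, and c, d : E → ℝ linear functionals. Then the set of objective values of the fractional problem equals the set of objective values of its homogenization with θ > 0: { c(x)/d(x) : x ∈ K_2, b − A(x) ∈ K_1, d(x) > 0 } = { c(w) : ∃ θ > 0, w ∈ K_2, θ • b − A(w) ∈ K_1, d(w) = 1 }. -/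
theorem stmt_7 {E F : Type*} [AddCommGroup E] [Module ℝ E] [AddCommGroup F] [Module ℝ F]
    (K₁ : ConvexCone ℝ F) (K₂ : ConvexCone ℝ E)
    (A : E →ₗ[ℝ] F) (b : F) (c d : E →ₗ[ℝ] ℝ) :
    {r : ℝ | ∃ x : E, x ∈ K₂ ∧ b - A x ∈ K₁ ∧ 0 < d x ∧ r = c x / d x} =
      {r : ℝ | ∃ w : E, ∃ θ : ℝ, 0 < θ ∧ w ∈ K₂ ∧ θ • b - A w ∈ K₁ ∧ d w = 1 ∧ r = c w} := by
  ext r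
  simp only [Set.mem_setOf_eq]
  constructor
  · rintro ⟨x, hx, hb, hd, rfl⟩
    refine ⟨(d x)⁻¹ • x, (d x)⁻¹, by positivity, K₂.smul_mem (by positivity) hx, ?_, ?_, ?_⟩
    · have : (d x)⁻¹ • b - A ((d x)⁻¹ • x) = (d x)⁻¹ • (b - A x) := by
        simp [smul_sub, map_smul]
      rw [this]
      exact K₁.smul_mem (by positivity) hb
    · simp [map_smul, smul_eq_mul, inv_mul_cancel₀ hd.ne']
    · simp [map_smul, smul_eq_mul, div_eq_inv_mul]
  · rintro ⟨w, θ, hθ, hw, hb, hd1, rfl⟩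
    refine ⟨θ⁻¹ • w, K₂.smul_mem (by positivity) hw, ?_, ?_, ?_⟩
    · have : b - A (θ⁻¹ • w) = θ⁻¹ • (θ • b - A w) := by
        simp [smul_sub, map_smul, smul_smul, inv_mul_cancel₀ hθ.ne']
      rw [this]
      exact K₁.smul_mem (by positivity) hb
    · simp [map_smul, hd1]; positivity
    · simp [map_smul, hd1, smul_eq_mul, mul_div_assoc]; field_simp
end
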